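/- Let f(λ) = C_H (1 - cos λ) ∑_{j∈ℤ} |λ + 2jπ|^{-(2H+1)} with C_H = (1/(2π))Γ(2H+1)sin(πH), H ∈ (0,1). Then f(λ)/((C_H/2)λ^{1-2H}) → 1 as λ → 0⁺. -/

import Mathlib

open Filter Real

/-- Spectral density of fractional Gaussian noise. -/
noncomputable def fgnSpectral (H : ℝ) (lam : ℝ) : ℝ :=
  (1 / (2 * π) * Real.Gamma (2 * H + 1) * Real.sin (π * H)) * (1 - Real.cos lam) *
    ∑' j : ℤ, 1 / |lam + 2 * (j : ℝ) * π| ^ (2 * H + 1)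

private lemma fgn_abs_lower {lam : ℝ} (h1 : 0 < lam) (h2 : lam < π) {j : ℤ} (hj : j ≠ 0) :
    |(j : ℝ)| * π ≤ |lam + 2 * (j : ℝ) * π| := by
  have hπ := Real.pi_pos
  rcases lt_or_gt_of_ne hj with hneg | hpos
  · have hj1 : (j : ℝ) ≤ -1 := by exact_mod_cast (by omega : j ≤ -1)
    have habs : |(j : ℝ)| = -(j : ℝ) := abs_of_neg (by linarith)
    have habs2 : |lam + 2 * (j : ℝ) * π| = -(lam + 2 * (j : ℝ) * π) :=
      abs_of_neg (by nlinarith)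
    rw [habs, habs2]; nlinarith
  · have hj1 : (1 : ℝ) ≤ (j : ℝ) := by exact_mod_cast (by omega : (1:ℤ) ≤ j)
    have habs : |(j : ℝ)| = (j : ℝ) := abs_of_pos (by linarith)
    have habs2 : |lam + 2 * (j : ℝ) * π| = lam + 2 * (j : ℝ) * π :=
      abs_of_pos (by nlinarith)
    rw [habs, habs2]; nlinarith

private lemma fgn_term_bound {H : ℝ} (hH0 : 0 < H) {lam : ℝ} (h1 : 0 < lam) (h2 : lam < π)
    (j : ℤ) :
    (if j = 0 then 0 else 1 / |lam + 2 * (j : ℝ) * π| ^ (2 * H + 1)) ≤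
      |(j : ℝ)| ^ (-(2 * H + 1)) * π ^ (-(2 * H + 1)) := by
  have hπ := Real.pi_pos
  split_ifs with hj
  · positivity
  · have hjpos : (0 : ℝ) < |(j : ℝ)| := abs_pos.mpr (Int.cast_ne_zero.mpr hj)
    have h0 : (0 : ℝ) < |(j : ℝ)| * π := mul_pos hjpos hπ
    have key := fgn_abs_lower h1 h2 hj
    calc 1 / |lam + 2 * (j : ℝ) * π| ^ (2 * H + 1)
        ≤ 1 / (|(j : ℝ)| * π) ^ (2 * H + 1) := by
          apply one_div_le_one_div_of_le (Real.rpow_pos_of_pos h0 _)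
          exact Real.rpow_le_rpow h0.le key (by linarith)
      _ = |(j : ℝ)| ^ (-(2 * H + 1)) * π ^ (-(2 * H + 1)) := by
          rw [Real.mul_rpow hjpos.le hπ.le, Real.rpow_neg hjpos.le, Real.rpow_neg hπ.le,
            one_div, mul_inv]

private lemma fgn_tail_summable {H : ℝ} (hH0 : 0 < H) {lam : ℝ} (h1 : 0 < lam) (h2 : lam < π) :
    Summable (fun j : ℤ => if j = 0 then 0 else 1 / |lam + 2 * (j : ℝ) * π| ^ (2 * H + 1)) := by
  apply Summable.of_nonneg_of_le (fun j => ?_) (fun j => fgn_term_bound hH0 h1 h2 j)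
  · exact (Real.summable_abs_int_rpow (by linarith : (1:ℝ) < 2 * H + 1)).mul_right _
  · split_ifs <;> positivity

private lemma fgn_summable {H : ℝ} (hH0 : 0 < H) {lam : ℝ} (h1 : 0 < lam) (h2 : lam < π) :
    Summable (fun j : ℤ => 1 / |lam + 2 * (j : ℝ) * π| ^ (2 * H + 1)) := by
  have h := (fgn_tail_summable hH0 h1 h2).add
    ((hasSum_ite_eq (0 : ℤ) (1 / |lam + 2 * (0 : ℝ) * π| ^ (2 * H + 1))).summable)
  refine h.congr fun j => ?_
  by_cases hj : j = 0 <;> simp [hj]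

theorem fgn_spectral_asymptotic (H : ℝ) (hH : H ∈ Set.Ioo (0 : ℝ) 1) :
    Tendsto (fun lam : ℝ =>
        fgnSpectral H lam
          / ((1 / (2 * π) * Real.Gamma (2 * H + 1) * Real.sin (π * H)) / 2
              * lam ^ (1 - 2 * H)))
      (nhdsWithin 0 (Set.Ioi 0)) (nhds 1) := by
  obtain ⟨hH0, hH1⟩ := hH
  have hπ := Real.pi_pos
  set C : ℝ := 1 / (2 * π) * Real.Gamma (2 * H + 1) * Real.sin (π * H) with hCdef
  have hC : 0 < C := by
    apply mul_pos (mul_pos (by positivity) (Real.Gamma_pos_of_pos (by linarith)))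
    exact Real.sin_pos_of_pos_of_lt_pi (by positivity) (by nlinarith)
  -- tail sum
  set S : ℝ → ℝ := fun lam =>
    ∑' j : ℤ, if j = 0 then 0 else 1 / |lam + 2 * (j : ℝ) * π| ^ (2 * H + 1) with hSdef
  set M : ℝ := ∑' j : ℤ, |(j : ℝ)| ^ (-(2 * H + 1)) * π ^ (-(2 * H + 1)) with hMdef
  -- the two pieces
  set A : ℝ → ℝ := fun lam => (Real.sin (lam / 2) / (lam / 2)) ^ 2 with hAdef
  set B : ℝ → ℝ := fun lam => 2 * (1 - Real.cos lam) * lam ^ (2 * H - 1) * S lam with hBdef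
  have hmem : Set.Ioo (0:ℝ) π ∈ nhdsWithin (0:ℝ) (Set.Ioi 0) :=
    Ioo_mem_nhdsGT hπ
  -- eventual identity
  have hEq : ∀ᶠ lam in nhdsWithin (0:ℝ) (Set.Ioi 0),
      fgnSpectral H lam / (C / 2 * lam ^ (1 - 2 * H)) = A lam + B lam := by
    filter_upwards [hmem] with lam hlam
    obtain ⟨h1, h2⟩ := hlam
    have hsum := fgn_summable hH0 h1 h2
    have hsplit : (∑' j : ℤ, 1 / |lam + 2 * (j : ℝ) * π| ^ (2 * H + 1)) =
        1 / lam ^ (2 * H + 1) + S lam := by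
      rw [hsum.tsum_eq_add_tsum_ite 0]
      congr 1
      rw [show lam + 2 * ((0:ℤ) : ℝ) * π = lam by push_cast; ring, abs_of_pos h1]
    have hlamne : lam ≠ 0 := h1.ne'
    have hX : (0:ℝ) < lam ^ (2 * H + 1) := Real.rpow_pos_of_pos h1 _
    have hL : (0:ℝ) < lam ^ (1 - 2 * H) := Real.rpow_pos_of_pos h1 _
    have hY : (0:ℝ) < lam ^ (2 * H - 1) := Real.rpow_pos_of_pos h1 _
    have hXL : lam ^ (2 * H + 1) * lam ^ (1 - 2 * H) = lam ^ 2 := by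
      rw [← Real.rpow_add h1, show 2 * H + 1 + (1 - 2 * H) = 2 by ring, Real.rpow_two]
    have hYL : lam ^ (2 * H - 1) * lam ^ (1 - 2 * H) = 1 := by
      rw [← Real.rpow_add h1, show 2 * H - 1 + (1 - 2 * H) = 0 by ring, Real.rpow_zero]
    have hsin : Real.sin (lam / 2) ^ 2 = (1 - Real.cos lam) / 2 := by
      rw [← sq_abs, Real.abs_sin_half,
        Real.sq_sqrt (by nlinarith [Real.cos_le_one lam] : (0:ℝ) ≤ (1 - Real.cos lam) / 2)]
    have hcos : 1 - Real.cos lam = 2 * Real.sin (lam / 2) ^ 2 := by rw [hsin]; ring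
    rw [fgnSpectral, ← hCdef, hsplit, hAdef, hBdef]
    rw [div_eq_iff (by positivity : C / 2 * lam ^ (1 - 2 * H) ≠ 0)]
    have expand : ((Real.sin (lam / 2) / (lam / 2)) ^ 2
          + 2 * (1 - Real.cos lam) * lam ^ (2 * H - 1) * S lam) * (C / 2 * lam ^ (1 - 2 * H))
        = Real.sin (lam / 2) ^ 2 / (lam / 2) ^ 2 * (C / 2 * lam ^ (1 - 2 * H))
          + (1 - Real.cos lam) * S lam * C * (lam ^ (2 * H - 1) * lam ^ (1 - 2 * H)) := by
      rw [div_pow]; ring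
    rw [expand, hYL, hcos]
    have hXne : lam ^ (2 * H + 1) ≠ 0 := hX.ne'
    field_simp
    linear_combination (-(Real.sin (lam / 2) ^ 2)) * hXL
  have hA : Tendsto A (nhdsWithin 0 (Set.Ioi 0)) (nhds 1) := by
    -- A → 1
    have hd : HasDerivAt Real.sin 1 0 := by simpa using Real.hasDerivAt_sin 0
    have hslope : Tendsto (fun x : ℝ => Real.sin x / x) (nhdsWithin 0 {(0:ℝ)}ᶜ) (nhds 1) := by
      refine (hasDerivAt_iff_tendsto_slope.mp hd).congr fun x => ?_
      simp [slope_def_field, div_eq_mul_inv]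
    have hhalf : Tendsto (fun lam : ℝ => lam / 2) (nhdsWithin 0 (Set.Ioi 0))
        (nhdsWithin 0 {(0:ℝ)}ᶜ) := by
      apply tendsto_nhdsWithin_of_tendsto_nhds_of_eventually_within
      · have : Tendsto (fun lam : ℝ => lam / 2) (nhds 0) (nhds (0/2)) :=
          (tendsto_id.div_const 2)
        simpa using this.mono_left nhdsWithin_le_nhds
      · filter_upwards [self_mem_nhdsWithin] with x hx
        simp only [Set.mem_compl_iff, Set.mem_singleton_iff]
        exact div_ne_zero (ne_of_gt hx) two_ne_zero
    have := (hslope.comp hhalf).pow 2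
    simpa using this
  have hB : Tendsto B (nhdsWithin 0 (Set.Ioi 0)) (nhds 0) := by
    -- B → 0
    have hMterm : Summable (fun j : ℤ => |(j : ℝ)| ^ (-(2 * H + 1)) * π ^ (-(2 * H + 1))) :=
      (Real.summable_abs_int_rpow (by linarith : (1:ℝ) < 2 * H + 1)).mul_right _
    have hBub : ∀ᶠ lam in nhdsWithin (0:ℝ) (Set.Ioi 0), B lam ≤ lam ^ (2 * H + 1) * M := by
      filter_upwards [hmem] with lam hlam
      obtain ⟨h1, h2⟩ := hlam
      have hSle : S lam ≤ M :=
        Summable.tsum_le_tsum (fgn_term_bound hH0 h1 h2) (fgn_tail_summable hH0 h1 h2) hMterm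
      have hSnn : 0 ≤ S lam := tsum_nonneg fun j => by split_ifs <;> positivity
      have hcosle : 1 - Real.cos lam ≤ lam ^ 2 / 2 := by
        have hsin : Real.sin (lam / 2) ^ 2 = (1 - Real.cos lam) / 2 := by
          rw [← sq_abs, Real.abs_sin_half,
            Real.sq_sqrt (by nlinarith [Real.cos_le_one lam] : (0:ℝ) ≤ (1 - Real.cos lam) / 2)]
        have hs1 : Real.sin (lam / 2) ≤ lam / 2 := Real.sin_le (by linarith)
        have hs0 : 0 ≤ Real.sin (lam / 2) :=
          Real.sin_nonneg_of_nonneg_of_le_pi (by linarith) (by linarith)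
        nlinarith
      have hY : (0:ℝ) < lam ^ (2 * H - 1) := Real.rpow_pos_of_pos h1 _
      have hstep : B lam ≤ 2 * (lam ^ 2 / 2) * lam ^ (2 * H - 1) * M := by
        simp only [hBdef]
        have hcosnn : 0 ≤ 1 - Real.cos lam := by nlinarith [Real.cos_le_one lam]
        gcongr
      calc B lam ≤ 2 * (lam ^ 2 / 2) * lam ^ (2 * H - 1) * M := hstep
        _ = lam ^ 2 * lam ^ (2 * H - 1) * M := by ring
        _ = lam ^ (2 * H + 1) * M := by
            rw [← Real.rpow_two, ← Real.rpow_add h1,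
              show (2:ℝ) + (2 * H - 1) = 2 * H + 1 by ring]
    have hBnn : ∀ᶠ lam in nhdsWithin (0:ℝ) (Set.Ioi 0), 0 ≤ B lam := by
      filter_upwards [hmem] with lam hlam
      obtain ⟨h1, h2⟩ := hlam
      have hSnn : 0 ≤ S lam := tsum_nonneg fun j => by split_ifs <;> positivity
      have hcosnn : 0 ≤ 1 - Real.cos lam := by nlinarith [Real.cos_le_one lam]
      have hY : (0:ℝ) ≤ lam ^ (2 * H - 1) := (Real.rpow_pos_of_pos h1 _).le
      simp only [hBdef]; positivity
    have hub : Tendsto (fun lam : ℝ => lam ^ (2 * H + 1) * M)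
        (nhdsWithin 0 (Set.Ioi 0)) (nhds 0) := by
      have hcont : ContinuousAt (fun x : ℝ => x ^ (2 * H + 1)) 0 :=
        Real.continuousAt_rpow_const 0 (2 * H + 1) (Or.inr (by linarith))
      have := (hcont.tendsto.mono_left (nhdsWithin_le_nhds (s := Set.Ioi (0:ℝ)))).mul_const M
      rw [Real.zero_rpow (by linarith : 2 * H + 1 ≠ 0), zero_mul] at this
      exact this
    exact squeeze_zero' hBnn hBub hub
  have hsum := hA.add hB
  rw [add_zero] at hsum
  exact Tendsto.congr' (hEq.mono fun x h => h.symm) hsum
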